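/- For β > 0, define a_c(β) = 1/2 - log(cosh(β/2))/β and φ_β(a) = e^{β(1-a)/2} sinh(aβ/2)/sinh(β/2). Then the stationarity equation defining z₀ = (1/β) log(φ_β(a)/(1 - φ_β(a))) satisfies: z₀ ∈ (0,1) if and only if a ∈ (a_c(β), 1 - a_c(β)). -/

import Mathlib

/-- for `β > 0`, with `a_c(β) = 1/2 - log(cosh(β/2))/β`,
`φ_β(a) = e^{β(1-a)/2} sinh(aβ/2)/sinh(β/2)` and
`z₀ = (1/β) log(φ_β(a)/(1 - φ_β(a)))` (assuming `0 < φ_β(a) < 1`):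
`z₀ ∈ (0,1)` if and only if `a ∈ (a_c(β), 1 - a_c(β))`. -/
theorem stationary_point_iff (β a : ℝ) (hβ : 0 < β) (ha : a ∈ Set.Ioo (0 : ℝ) 1)
    (φ : ℝ) (hφ : φ = Real.exp (β * (1 - a) / 2) * Real.sinh (a * β / 2) / Real.sinh (β / 2))
    (hφ0 : 0 < φ) (hφ1 : φ < 1)
    (z₀ : ℝ) (hz₀ : z₀ = (1 / β) * Real.log (φ / (1 - φ)))
    (ac : ℝ) (hac : ac = 1 / 2 - Real.log (Real.cosh (β / 2)) / β) :
    z₀ ∈ Set.Ioo (0 : ℝ) 1 ↔ a ∈ Set.Ioo ac (1 - ac) := by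
  obtain ⟨ha0, ha1⟩ := ha
  have ht : 0 < β / 2 := by linarith
  have hS : 0 < Real.sinh (β / 2) := Real.sinh_pos_iff.mpr ht
  have hC : 0 < Real.cosh (β / 2) := Real.cosh_pos _
  obtain ⟨L, hL⟩ : ∃ x, x = Real.log (Real.cosh (β / 2)) := ⟨_, rfl⟩
  have h1φ : 0 < 1 - φ := by linarith
  have hr : 0 < φ / (1 - φ) := div_pos hφ0 h1φ
  obtain ⟨A, hA⟩ : ∃ x, x = Real.exp (β / 2) := ⟨_, rfl⟩
  obtain ⟨B, hB⟩ : ∃ x, x = Real.exp (-(β / 2)) := ⟨_, rfl⟩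
  obtain ⟨U, hU⟩ : ∃ x, x = Real.exp ((1 - 2 * a) * (β / 2)) := ⟨_, rfl⟩
  obtain ⟨V, hV⟩ : ∃ x, x = Real.exp (-((1 - 2 * a) * (β / 2))) := ⟨_, rfl⟩
  have hApos : 0 < A := hA ▸ Real.exp_pos _
  have hBpos : 0 < B := hB ▸ Real.exp_pos _
  have hUpos : 0 < U := hU ▸ Real.exp_pos _
  have hVpos : 0 < V := hV ▸ Real.exp_pos _
  have hAB : A * B = 1 := by rw [hA, hB, ← Real.exp_add]; simp
  have hUV : U * V = 1 := by rw [hU, hV, ← Real.exp_add]; simp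
  have hEβ : Real.exp β = A * A := by rw [hA, ← Real.exp_add]; ring_nf
  have hsinh : Real.sinh (β / 2) = (A - B) / 2 := by rw [Real.sinh_eq, hA, hB]
  have hcosh : Real.cosh (β / 2) = (A + B) / 2 := by rw [Real.cosh_eq, hA, hB]
  -- key identity: exp(β(1-a)/2) * sinh(aβ/2) = (A - U)/2
  have e1 : Real.exp (β * (1 - a) / 2) * Real.exp (a * β / 2) = A := by
    rw [hA, ← Real.exp_add]; ring_nf
  have e2 : Real.exp (β * (1 - a) / 2) * Real.exp (-(a * β / 2)) = U := by
    rw [hU, ← Real.exp_add]; ring_nf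
  have hN : Real.exp (β * (1 - a) / 2) * Real.sinh (a * β / 2) = (A - U) / 2 := by
    rw [Real.sinh_eq]
    linear_combination e1 / 2 - e2 / 2
  have hφS : φ * ((A - B) / 2) = (A - U) / 2 := by
    rw [← hsinh, ← hN, hφ]
    field_simp
  have hABpos : 0 < (A - B) / 2 := by rw [← hsinh]; exact hS
  have h1φS : (1 - φ) * ((A - B) / 2) = (U - B) / 2 := by linear_combination -hφS
  have hexpL : Real.exp L = (A + B) / 2 := by rw [hL, Real.exp_log hC, hcosh]
  have hA2B : A * A * B = A := by rw [mul_assoc, hAB, mul_one]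
  -- condition 1 : 1 < φ/(1-φ) ↔ ac < a
  have cond1 : 1 < φ / (1 - φ) ↔ ac < a := by
    rw [one_lt_div h1φ]
    have step1 : 1 - φ < φ ↔ 2 * U < A + B := by
      constructor <;> intro h
      · have h' := mul_lt_mul_of_pos_right h hABpos
        linarith only [h', hφS, h1φS]
      · have h' : (1 - φ) * ((A - B) / 2) < φ * ((A - B) / 2) := by
          rw [hφS, h1φS]; linarith only [h]
        exact lt_of_mul_lt_mul_right h' hABpos.le
    have step2 : 2 * U < A + B ↔ (1 - 2 * a) * (β / 2) < L := by
      rw [← Real.exp_lt_exp (x := (1 - 2 * a) * (β / 2)) (y := L), hexpL, ← hU]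
      constructor <;> intro h <;> linarith only [h]
    have step3 : ac < a ↔ (1 - 2 * a) * (β / 2) < L := by
      rw [hac, ← hL, sub_lt_comm, lt_div_iff₀ hβ,
        show (1 / 2 - a) * β = (1 - 2 * a) * (β / 2) from by ring]
    rw [step1, step2, step3]
  -- condition 2 : φ/(1-φ) < exp β ↔ a < 1 - ac
  have cond2 : φ / (1 - φ) < Real.exp β ↔ a < 1 - ac := by
    rw [hEβ, div_lt_iff₀ h1φ]
    have hUV1 : U * (1 + A * A) * V = 1 + A * A := by linear_combination (1 + A * A) * hUV
    have step1 : φ < A * A * (1 - φ) ↔ 2 * A * V < A * A + 1 := by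
      constructor <;> intro h
      · have h' : (A - U) / 2 < A * A * ((U - B) / 2) := by
          calc (A - U) / 2 = φ * ((A - B) / 2) := hφS.symm
            _ < A * A * (1 - φ) * ((A - B) / 2) := mul_lt_mul_of_pos_right h hABpos
            _ = A * A * ((1 - φ) * ((A - B) / 2)) := by ring
            _ = A * A * ((U - B) / 2) := by rw [h1φS]
        have h2 : 2 * A < U * (1 + A * A) := by linarith only [h', hA2B]
        have h6 := mul_lt_mul_of_pos_right h2 hVpos
        linarith only [h6, hUV1]
      · have h6 := mul_lt_mul_of_pos_right h hUpos
        have h2 : 2 * A < U * (1 + A * A) := by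
          have : 2 * A * V * U = 2 * A := by linear_combination 2 * A * hUV
          linarith only [h6, this]
        have h3 : (A - U) / 2 < A * A * ((U - B) / 2) := by linarith only [h2, hA2B]
        have h4 : φ * ((A - B) / 2) < A * A * (1 - φ) * ((A - B) / 2) := by
          rw [hφS]
          calc (A - U) / 2 < A * A * ((U - B) / 2) := h3
            _ = A * A * ((1 - φ) * ((A - B) / 2)) := by rw [h1φS]
            _ = A * A * (1 - φ) * ((A - B) / 2) := by ring
        exact lt_of_mul_lt_mul_right h4 hABpos.le
    have hAAB : A * (A + B) = A * A + 1 := by linear_combination hAB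
    have step2 : 2 * A * V < A * A + 1 ↔ -((1 - 2 * a) * (β / 2)) < L := by
      rw [← Real.exp_lt_exp (x := -((1 - 2 * a) * (β / 2))) (y := L), hexpL, ← hV]
      constructor <;> intro h
      · have h5 : A * (2 * V) < A * (A + B) := by linarith only [h, hAAB]
        have h6 := lt_of_mul_lt_mul_left h5 hApos.le
        linarith only [h6]
      · have h6 := mul_lt_mul_of_pos_left h hApos
        linarith only [h6, hAAB]
    have step3 : a < 1 - ac ↔ -((1 - 2 * a) * (β / 2)) < L := by
      rw [hac, ← hL]
      have e3 : a < 1 - (1 / 2 - L / β) ↔ a - 1 / 2 < L / β := by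
        constructor <;> intro h <;> linarith only [h]
      rw [e3, lt_div_iff₀ hβ,
        show (a - 1 / 2) * β = -((1 - 2 * a) * (β / 2)) from by ring]
    rw [step1, step2, step3]
  -- assemble
  rw [Set.mem_Ioo, Set.mem_Ioo, hz₀]
  have hlogpos : 0 < Real.log (φ / (1 - φ)) ↔ 1 < φ / (1 - φ) := Real.log_pos_iff hr.le
  have hloglt : Real.log (φ / (1 - φ)) < β ↔ φ / (1 - φ) < Real.exp β :=
    Real.log_lt_iff_lt_exp hr
  have h7 : Real.log (φ / (1 - φ)) = β * (1 / β * Real.log (φ / (1 - φ))) := by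
    field_simp
  constructor
  · rintro ⟨h0, h1⟩
    have hl0 : 0 < Real.log (φ / (1 - φ)) := by
      have h8 := mul_pos hβ h0
      linarith only [h7, h8]
    have hl1 : Real.log (φ / (1 - φ)) < β := by
      have h8 := mul_lt_mul_of_pos_left h1 hβ
      rw [mul_one] at h8
      linarith only [h7, h8]
    exact ⟨cond1.mp (hlogpos.mp hl0), cond2.mp (hloglt.mp hl1)⟩
  · rintro ⟨h0, h1⟩
    have hl0 : 0 < Real.log (φ / (1 - φ)) := hlogpos.mpr (cond1.mpr h0)
    have hl1 : Real.log (φ / (1 - φ)) < β := hloglt.mpr (cond2.mpr h1)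
    constructor
    · positivity
    · have h9 : 1 / β * Real.log (φ / (1 - φ)) < 1 / β * β :=
        mul_lt_mul_of_pos_left hl1 (by positivity)
      rw [one_div, inv_mul_cancel₀ hβ.ne'] at h9
      rw [one_div]
      exact h9
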